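/- Let p and q be pmfs on [n] = {1,...,n} such that q ⪯ p, p(1) ≥ p(2) ≥ ⋯ ≥ p(n) and q(1) ≥ q(2) ≥ ⋯ ≥ q(n). Then there exist, for each x ∈ {2,...,n}, an index a_x ∈ {1,...,x−1} and a real number r_x with 0 ≤ r_x ≤ q(x), such that, setting r_1 = 0, for every x ∈ {1,...,n}: p(x) = q(x) − r_x + Σ_{y : a_y = x} r_y. -/

import Mathlib

open scoped ENNReal Classical
open Filter

namespace MEC

/-- A probability mass function on `α`: (nonnegative) masses summing to `1`. -/
def IsPMF {α : Type*} (p : α → ℝ≥0∞) : Prop := ∑' x, p x = 1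

/-- `p` is an aggregation of `q`, written `q ⊑ p`: there is a map `g` sending the support of
`q` into the support of `p` such that `p` is the pushforward of `q` under `g`. -/
def Agg {α β : Type*} (q : α → ℝ≥0∞) (p : β → ℝ≥0∞) : Prop :=
  ∃ g : α → β, (∀ x, q x ≠ 0 → p (g x) ≠ 0) ∧
    ∀ y, p y = ∑' x, if g x = y then q x else 0

/-- Sum of the `k` largest masses of `p`, i.e. `max_{A, |A| ≤ k} p(A)`. -/
noncomputable def topk {α : Type*} (p : α → ℝ≥0∞) (k : ℕ) : ℝ≥0∞ :=
  ⨆ (A : Finset α) (_ : A.card ≤ k), ∑ x ∈ A, p x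

/-- `q` is majorized by `p`, written `q ⪯ p`: for every `k`, the sum of the `k` largest
masses of `q` is at most the sum of the `k` largest masses of `p`. -/
def Majorized {α β : Type*} (q : α → ℝ≥0∞) (p : β → ℝ≥0∞) : Prop :=
  ∀ k : ℕ, topk q k ≤ topk p k

/-- Product pmf `(q × r)(x,z) = q(x) · r(z)`. -/
noncomputable def prodFun {α β : Type*} (q : α → ℝ≥0∞) (r : β → ℝ≥0∞) : α × β → ℝ≥0∞ :=
  fun z => q z.1 * r z.2

/-- `Geom_{1/2}` on `ℕ+ = {1,2,3,...}`, with mass `2^{-x}` at `x`. -/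
noncomputable def geomHalf : ℕ+ → ℝ≥0∞ := fun x => 2⁻¹ ^ (x : ℕ)

/-- Capped geometric distribution `CGeom_{1/2,k}` on `{1,...,k} ⊆ ℕ+`. -/
noncomputable def cgeomHalf (k : ℕ) : ℕ+ → ℝ≥0∞ := fun x =>
  if (x : ℕ) < k then 2⁻¹ ^ (x : ℕ) else if (x : ℕ) = k then 2⁻¹ ^ (k - 1) else 0

/-- `inf_{p ∈ S} max_{A ⊆ supp(p), |A| ≤ k} p(A)`. -/
noncomputable def infTopk {α : Type*} (S : Set (α → ℝ≥0∞)) (k : ℕ) : ℝ≥0∞ :=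
  ⨅ p ∈ S, topk p k

/-- The greatest lower bound `⋀S` of `S` with respect to majorization, as a pmf on
`ℕ+ = {1,2,...}`, with `(⋀S)(k) = inf_{p∈S} max_{|A|≤k} p(A) − inf_{p∈S} max_{|A|≤k−1} p(A)`. -/
noncomputable def glb {α : Type*} (S : Set (α → ℝ≥0∞)) : ℕ+ → ℝ≥0∞ :=
  fun k => infTopk S (k : ℕ) - infTopk S ((k : ℕ) - 1)

/-- Condition for the existence of `⋀S`:
`lim_{k→∞} inf_{p∈S} max_{A⊆supp(p), |A|≤k} p(A) = 1`. -/
def GlbExists {α : Type*} (S : Set (α → ℝ≥0∞)) : Prop :=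
  Tendsto (fun k => infTopk S k) atTop (nhds 1)

/-- Base-2 logarithm on `ℝ≥0∞` (intended for arguments in `[1,∞]`). -/
noncomputable def log2 (x : ℝ≥0∞) : ℝ≥0∞ :=
  if x = ∞ then ∞ else ENNReal.ofReal (Real.logb 2 x.toReal)

/-- Shannon entropy (base 2): `H(p) = Σ_x p(x) log₂ (1/p(x))`. -/
noncomputable def shannon {α : Type*} (p : α → ℝ≥0∞) : ℝ≥0∞ :=
  ∑' x, p x * log2 (p x)⁻¹

/-- Rényi entropy of order `a ∈ [0,∞]` (base 2):
`H_a(p) = (1/(1−a)) log₂ Σ_{x ∈ supp(p)} p(x)^a` for `a ∉ {1,∞}` (for `a > 1` this is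
written in the equivalent form `(1/(a−1)) log₂ (Σ_{x ∈ supp(p)} p(x)^a)⁻¹` so that it is
nonnegative), Shannon entropy for `a = 1`, and `−log₂ max_x p(x)` for `a = ∞`. -/
noncomputable def renyi {α : Type*} (p : α → ℝ≥0∞) (a : ℝ≥0∞) : ℝ≥0∞ :=
  if a = 1 then shannon p
  else if a = ∞ then log2 (⨆ x, p x)⁻¹
  else if a < 1 then log2 (∑' x, if p x = 0 then 0 else p x ^ a.toReal) * (1 - a)⁻¹
  else log2 (∑' x, if p x = 0 then 0 else p x ^ a.toReal)⁻¹ * (a - 1)⁻¹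

/-- `q ∈ Γ̃(S)`: `q` (a pmf over `ℕ`, without loss of generality) is an underlying
distribution of a coupling of `S`, i.e. `q ⊑ p` for every `p ∈ S`. -/
def UnderlyingCoupling {α : Type*} (S : Set (α → ℝ≥0∞)) (q : ℕ → ℝ≥0∞) : Prop :=
  IsPMF q ∧ ∀ p ∈ S, Agg q p

/-- `H*_a(S) = inf_{q ∈ Γ̃(S)} H_a(q)`, the minimum Rényi entropy of couplings of `S`. -/
noncomputable def minRenyi {α : Type*} (S : Set (α → ℝ≥0∞)) (a : ℝ≥0∞) : ℝ≥0∞ :=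
  ⨅ (q : ℕ → ℝ≥0∞) (_ : UnderlyingCoupling S q), renyi q a

/-- Prefix sum helper: sum of `f` over indices `< k`. -/
private noncomputable def Sf {m : ℕ} (f : Fin m → ℝ) (k : ℕ) : ℝ :=
  ∑ x ∈ Finset.univ.filter (fun x : Fin m => (x : ℕ) < k), f x

private lemma Sf_zero {m : ℕ} (f : Fin m → ℝ) : Sf f 0 = 0 := by
  simp [Sf]

private lemma Sf_castSucc {n : ℕ} (f : Fin (n + 1) → ℝ) (k : ℕ) :
    Sf f k = Sf (fun x : Fin n => f x.castSucc) k + (if n < k then f (Fin.last n) else 0) := by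
  simp only [Sf, Finset.sum_filter, Fin.sum_univ_castSucc, Fin.coe_castSucc, Fin.val_last]

private lemma Sf_univ {m : ℕ} (f : Fin m → ℝ) {k : ℕ} (hk : m ≤ k) : Sf f k = ∑ x, f x := by
  unfold Sf
  rw [Finset.filter_true_of_mem]
  intro x _
  exact lt_of_lt_of_le x.isLt hk

private lemma Sf_succ_last {n : ℕ} (f : Fin (n + 1) → ℝ) :
    Sf f (n + 1) = Sf f n + f (Fin.last n) := by
  rw [Sf_castSucc f (n + 1), Sf_castSucc f n, Sf_univ _ (Nat.le_succ n), Sf_univ _ (le_refl n)]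
  simp

private lemma Sf_succ {m : ℕ} (f : Fin m → ℝ) {i : ℕ} (hi : i < m) :
    Sf f (i + 1) = Sf f i + f ⟨i, hi⟩ := by
  unfold Sf
  have hset : Finset.univ.filter (fun x : Fin m => (x : ℕ) < i + 1)
      = insert (⟨i, hi⟩ : Fin m) (Finset.univ.filter (fun x : Fin m => (x : ℕ) < i)) := by
    ext x
    simp only [Finset.mem_filter, Finset.mem_insert, Finset.mem_univ, true_and, Fin.ext_iff]
    omega
  rw [hset, Finset.sum_insert (by simp)]
  ring


private theorem majorized_alias_aux (n : ℕ) : ∀ (p q : Fin n → ℝ),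
    (∀ x, 0 ≤ p x) → (∀ x, 0 ≤ q x) →
    (∀ x y : Fin n, x ≤ y → q y ≤ q x) →
    (∀ k : ℕ, Sf q k ≤ Sf p k) →
    ((∑ x, q x) = ∑ x, p x) →
    ∃ (a : Fin n → Fin n) (r : Fin n → ℝ),
      (∀ x : Fin n, (x : ℕ) ≠ 0 → a x < x) ∧
      (∀ x : Fin n, (x : ℕ) = 0 → r x = 0) ∧
      (∀ x, 0 ≤ r x ∧ r x ≤ q x) ∧
      (∀ x, p x = q x - r x +
        ∑ y ∈ Finset.univ.filter (fun y : Fin n => (y : ℕ) ≠ 0 ∧ a y = x), r y) := by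
  induction n with
  | zero =>
    intro p q _ _ _ _ _
    exact ⟨Fin.elim0, Fin.elim0, fun x => x.elim0, fun x => x.elim0,
      fun x => x.elim0, fun x => x.elim0⟩
  | succ n ih =>
    intro p q hp0 hq0 hqsort hmaj htot
    rcases Nat.eq_zero_or_pos n with hn | hn
    · subst hn
      refine ⟨fun _ => 0, fun _ => 0, ?_, ?_, ?_, ?_⟩
      · intro x hx; exact absurd (by have := x.isLt; omega) hx
      · intro x _; rfl
      · intro x; exact ⟨le_refl 0, hq0 x⟩
      · intro x
        have hsum : (∑ y ∈ Finset.univ.filter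
            (fun y : Fin 1 => (y : ℕ) ≠ 0 ∧ (fun _ => (0 : Fin 1)) y = x), (0:ℝ)) = 0 := by
          simp
        rw [hsum]
        have hx : x = 0 := Fin.fin_one_eq_zero x
        have h1 : (∑ y : Fin 1, q y) = q 0 := by simp [Fin.sum_univ_one]
        have h2 : (∑ y : Fin 1, p y) = p 0 := by simp [Fin.sum_univ_one]
        rw [h1, h2] at htot
        subst hx
        show p 0 = q 0 - 0 + 0
        linarith
    · -- n ≥ 1
      obtain ⟨d, hd⟩ : ∃ d : ℝ, d = q (Fin.last n) - p (Fin.last n) := ⟨_, rfl⟩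
      have hAll : Sf q (n + 1) = Sf p (n + 1) := by
        rw [Sf_univ q (le_refl (n + 1)), Sf_univ p (le_refl (n + 1))]; exact htot
      have hAll' : Sf q n + q (Fin.last n) = Sf p n + p (Fin.last n) := by
        rw [← Sf_succ_last, ← Sf_succ_last]; exact hAll
      have hdn : Sf p n - Sf q n = d := by rw [hd]; linarith
      have hd0 : 0 ≤ d := by have := hmaj n; linarith
      classical
      let j : ℕ := Nat.findGreatest (fun k => Sf p k - Sf q k < d) (n - 1)
      have hjn : j < n := lt_of_le_of_lt (Nat.findGreatest_le _) (by omega)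
      have hj_ge : ∀ k, j < k → k ≤ n → d ≤ Sf p k - Sf q k := by
        intro k hjk hkn
        rcases eq_or_lt_of_le hkn with h | h
        · subst h; exact hdn.ge
        · have hk1 : k ≤ n - 1 := by omega
          have hnp := Nat.findGreatest_is_greatest hjk hk1
          exact not_lt.mp hnp
      set jF : Fin n := ⟨j, hjn⟩ with hjF
      have hdq : d ≤ q jF.castSucc := by
        have hql : q (Fin.last n) ≤ q jF.castSucc := hqsort _ _ (Fin.le_last _)
        have hpl := hp0 (Fin.last n)
        rw [hd]; linarith
      -- the reduced distributions
      have hp0' : ∀ x : Fin n, 0 ≤ p x.castSucc - (if x = jF then d else 0) := by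
        intro x
        by_cases hx : x = jF
        · subst hx
          rw [if_pos rfl]
          rcases eq_or_lt_of_le hd0 with h | h
          · have := hp0 jF.castSucc; linarith
          · have hPj : Sf p j - Sf q j < d := by
              have h0 : (fun k => Sf p k - Sf q k < d) 0 := by
                show Sf p 0 - Sf q 0 < d
                rw [Sf_zero, Sf_zero]; linarith
              exact Nat.findGreatest_spec (P := fun k => Sf p k - Sf q k < d) (Nat.zero_le _) h0
            have h1 : d ≤ Sf p (j + 1) - Sf q (j + 1) :=
              hj_ge (j + 1) (Nat.lt_succ_self j) (by omega)
            rw [Sf_succ p (by omega : j < n + 1), Sf_succ q (by omega : j < n + 1)] at h1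
            have hcs : jF.castSucc = (⟨j, by omega⟩ : Fin (n + 1)) := rfl
            rw [hcs] at hdq ⊢
            linarith
        · rw [if_neg hx]; have := hp0 x.castSucc; linarith
      have hq0' : ∀ x : Fin n, 0 ≤ q x.castSucc := fun x => hq0 _
      have hqsort' : ∀ x y : Fin n, x ≤ y → q y.castSucc ≤ q x.castSucc := by
        intro x y hxy; exact hqsort _ _ (Fin.castSucc_le_castSucc_iff.mpr hxy)
      have hq'k : ∀ k : ℕ, k ≤ n → Sf (fun x : Fin n => q x.castSucc) k = Sf q k := by
        intro k hk
        rw [Sf_castSucc q k, if_neg (by omega : ¬ n < k), add_zero]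
      have hp'k : ∀ k : ℕ, k ≤ n →
          Sf (fun x : Fin n => p x.castSucc - (if x = jF then d else 0)) k
            = Sf p k - (if j < k then d else 0) := by
        intro k hk
        have h1 : Sf (fun x : Fin n => p x.castSucc - (if x = jF then d else 0)) k
            = Sf (fun x : Fin n => p x.castSucc) k
              - Sf (fun x : Fin n => if x = jF then d else 0) k := by
          unfold Sf; rw [← Finset.sum_sub_distrib]
        have h2 : Sf (fun x : Fin n => p x.castSucc) k = Sf p k := by
          rw [Sf_castSucc p k, if_neg (by omega : ¬ n < k), add_zero]
        have h3 : Sf (fun x : Fin n => if x = jF then d else 0) k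
            = (if j < k then d else 0) := by
          unfold Sf
          rw [Finset.sum_ite_eq' _ jF (fun _ => d)]
          simp only [Finset.mem_filter, Finset.mem_univ, true_and]
          rfl
        rw [h1, h2, h3]
      have htot' : (∑ x : Fin n, q x.castSucc)
          = ∑ x : Fin n, (p x.castSucc - (if x = jF then d else 0)) := by
        rw [← Sf_univ (fun x : Fin n => q x.castSucc) (le_refl n),
          ← Sf_univ (fun x : Fin n => p x.castSucc - (if x = jF then d else 0)) (le_refl n),
          hq'k n (le_refl n), hp'k n (le_refl n), if_pos hjn]
        linarith
      have hmaj' : ∀ k : ℕ, Sf (fun x : Fin n => q x.castSucc) k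
          ≤ Sf (fun x : Fin n => p x.castSucc - (if x = jF then d else 0)) k := by
        intro k
        rcases le_or_gt k n with hk | hk
        · rw [hq'k k hk, hp'k k hk]
          by_cases hjk : j < k
          · rw [if_pos hjk]; have := hj_ge k hjk hk; linarith
          · rw [if_neg hjk]; have := hmaj k; linarith
        · rw [Sf_univ _ hk.le, Sf_univ _ hk.le]
          exact le_of_eq htot'
      obtain ⟨a', r', h1', h2', h3', h4'⟩ :=
        ih (fun x : Fin n => p x.castSucc - (if x = jF then d else 0))
          (fun x : Fin n => q x.castSucc) hp0' hq0' hqsort' hmaj' htot'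
      refine ⟨Fin.lastCases jF.castSucc (fun x => (a' x).castSucc),
        Fin.lastCases d (fun x => r' x), ?_, ?_, ?_, ?_⟩
      · intro x hx
        induction x using Fin.lastCases with
        | last =>
          simp only [Fin.lastCases_last]
          exact Fin.castSucc_lt_last jF
        | cast x' =>
          simp only [Fin.lastCases_castSucc]
          have hx' : (x' : ℕ) ≠ 0 := by simpa using hx
          exact Fin.castSucc_lt_castSucc_iff.mpr (h1' x' hx')
      · intro x hx
        induction x using Fin.lastCases with
        | last => exact absurd (show n = 0 by simpa using hx) (by omega)
        | cast x' =>
          simp only [Fin.lastCases_castSucc]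
          exact h2' x' (by simpa using hx)
      · intro x
        induction x using Fin.lastCases with
        | last =>
          simp only [Fin.lastCases_last]
          refine ⟨hd0, ?_⟩
          have := hp0 (Fin.last n)
          rw [hd]; linarith
        | cast x' =>
          simp only [Fin.lastCases_castSucc]
          exact h3' x'
      · intro x
        induction x using Fin.lastCases with
        | last =>
          have e1 : ∀ y' : Fin n, (a' y').castSucc ≠ Fin.last n :=
            fun y' => (Fin.castSucc_lt_last _).ne
          have e2 : jF.castSucc ≠ Fin.last n := (Fin.castSucc_lt_last _).ne
          simp only [Finset.sum_filter, Fin.sum_univ_castSucc, Fin.lastCases_castSucc,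
            Fin.lastCases_last, Fin.val_last, Fin.coe_castSucc, e1, e2, and_false, if_false,
            Finset.sum_const_zero, add_zero]
          rw [hd]; ring
        | cast x' =>
          have h4 := h4' x'
          rw [Finset.sum_filter] at h4
          simp only [Finset.sum_filter, Fin.sum_univ_castSucc, Fin.lastCases_castSucc,
            Fin.lastCases_last, Fin.val_last, Fin.coe_castSucc, Fin.castSucc_inj]
          by_cases hx : x' = jF
          · rw [if_pos (show (n : ℕ) ≠ 0 ∧ jF = x' from ⟨by omega, hx.symm⟩)]
            rw [if_pos hx] at h4
            linarith
          · have hne : ¬ ((n : ℕ) ≠ 0 ∧ jF = x') := fun hcon => hx hcon.2.symm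
            rw [if_neg hne]
            rw [if_neg hx] at h4
            linarith


/-- Lemma 1, majorized alias: for pmfs `p, q` on `[n]` (indexed here by
`Fin n`, so index `0` plays the role of `1 ∈ [n]`) sorted in descending order with `q ⪯ p`,
there exist `a_x < x` and `0 ≤ r_x ≤ q(x)` for `x ≠ 0`, with `r` vanishing at the first
index, such that `p(x) = q(x) − r_x + Σ_{y : a_y = x} r_y` for every `x`. -/
theorem majorized_alias (n : ℕ) (p q : Fin n → ℝ)
    (hp0 : ∀ x, 0 ≤ p x) (hq0 : ∀ x, 0 ≤ q x)
    (hp1 : ∑ x, p x = 1) (hq1 : ∑ x, q x = 1)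
    (hpsort : ∀ x y : Fin n, x ≤ y → p y ≤ p x)
    (hqsort : ∀ x y : Fin n, x ≤ y → q y ≤ q x)
    (hmaj : ∀ k : ℕ,
      ∑ x ∈ Finset.univ.filter (fun x : Fin n => (x : ℕ) < k), q x ≤
        ∑ x ∈ Finset.univ.filter (fun x : Fin n => (x : ℕ) < k), p x) :
    ∃ (a : Fin n → Fin n) (r : Fin n → ℝ),
      (∀ x : Fin n, (x : ℕ) ≠ 0 → a x < x) ∧
      (∀ x : Fin n, (x : ℕ) = 0 → r x = 0) ∧
      (∀ x, 0 ≤ r x ∧ r x ≤ q x) ∧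
      (∀ x, p x = q x - r x +
        ∑ y ∈ Finset.univ.filter (fun y : Fin n => (y : ℕ) ≠ 0 ∧ a y = x), r y) := by
  exact majorized_alias_aux n p q hp0 hq0 hqsort (fun k => hmaj k) (hq1.trans hp1.symm)

end MEC
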